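/- Let α > 0, d a positive integer, and z_1, …, z_d ∈ [1, 1+α]. Let z = (∏_{k=1}^d z_k)^(1/d). Then ∑_{k=1}^d ((z_k - 1)/z_k)·log(α/(z_k - 1)) ≤ d·((z-1)/z)·log(α/(z-1)). -/

import Mathlib

open Real Filter Set

private noncomputable def gfun (α : ℝ) : ℝ → ℝ :=
  fun x => (1 - Real.exp (-x)) * (Real.log α - Real.log (Real.exp x - 1))

private lemma gfun_eq (α x : ℝ) :
    gfun α x = (1 - Real.exp (-x)) * Real.log α
      - Real.exp (-x) * ((Real.exp x - 1) * Real.log (Real.exp x - 1)) := by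
  have h : Real.exp (-x) * Real.exp x = 1 := by rw [← Real.exp_add]; simp
  unfold gfun
  linear_combination (Real.log (Real.exp x - 1)) * h

private lemma gfun_cont (α : ℝ) (hα : 0 < α) (L : ℝ) :
    ContinuousOn (gfun α) (Set.Icc 0 L) := by
  intro x hx
  rcases eq_or_lt_of_le hx.1 with h | h
  · -- x = 0
    subst h
    have key : Filter.Tendsto (fun y : ℝ => Real.log y * y) (nhdsWithin 0 (Set.Ioi 0)) (nhds 0) :=
      (tendsto_log_mul_rpow_nhdsGT_zero one_pos).congr (fun y => by rw [Real.rpow_one])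
    have hφ : Filter.Tendsto (fun x : ℝ => Real.exp x - 1) (nhdsWithin 0 (Set.Ioi 0))
        (nhdsWithin 0 (Set.Ioi 0)) := by
      apply tendsto_nhdsWithin_of_tendsto_nhds_of_eventually_within
      · have hc : Continuous (fun x : ℝ => Real.exp x - 1) := by fun_prop
        have : Filter.Tendsto (fun x : ℝ => Real.exp x - 1) (nhds 0) (nhds 0) := by
          simpa using hc.tendsto 0
        exact this.mono_left nhdsWithin_le_nhds
      · filter_upwards [self_mem_nhdsWithin] with x hx
        simp only [Set.mem_Ioi] at hx ⊢
        have := Real.exp_lt_exp.2 hx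
        simp only [Real.exp_zero] at this
        linarith
    have T2 : Filter.Tendsto (fun x : ℝ => (Real.exp x - 1) * Real.log (Real.exp x - 1))
        (nhdsWithin 0 (Set.Ioi 0)) (nhds 0) := by
      have := key.comp hφ
      simpa [Function.comp_def, mul_comm] using this
    have T1 : Filter.Tendsto (fun x : ℝ => (1 - Real.exp (-x)) * Real.log α)
        (nhdsWithin 0 (Set.Ioi 0)) (nhds 0) := by
      have hc : Continuous (fun x : ℝ => (1 - Real.exp (-x)) * Real.log α) := by fun_prop
      have : Filter.Tendsto (fun x : ℝ => (1 - Real.exp (-x)) * Real.log α) (nhds 0) (nhds 0) := by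
        simpa using hc.tendsto 0
      exact this.mono_left nhdsWithin_le_nhds
    have T3 : Filter.Tendsto (fun x : ℝ => Real.exp (-x)) (nhdsWithin 0 (Set.Ioi 0)) (nhds 1) := by
      have hc : Continuous (fun x : ℝ => Real.exp (-x)) := by fun_prop
      have : Filter.Tendsto (fun x : ℝ => Real.exp (-x)) (nhds 0) (nhds 1) := by
        simpa using hc.tendsto 0
      exact this.mono_left nhdsWithin_le_nhds
    have htend : Filter.Tendsto (gfun α) (nhdsWithin 0 (Set.Ioi 0)) (nhds (0 - 1 * 0)) := by
      apply Filter.Tendsto.congr (fun x => (gfun_eq α x).symm)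
      exact T1.sub (T3.mul T2)
    have h0 : ContinuousWithinAt (gfun α) (Set.Ici (0:ℝ)) 0 := by
      rw [← Set.Ioi_insert, continuousWithinAt_insert_self]
      have g0 : gfun α 0 = 0 := by simp [gfun]
      rw [ContinuousWithinAt, g0]
      simpa using htend
    exact h0.mono Set.Icc_subset_Ici_self
  · -- x > 0
    have hne : Real.exp x - 1 ≠ 0 := by
      have := Real.exp_lt_exp.2 h
      simp only [Real.exp_zero] at this
      linarith
    have hc1 : ContinuousAt (fun y : ℝ => Real.exp y - 1) x := by fun_prop
    have hc2 : ContinuousAt (fun y : ℝ => Real.log (Real.exp y - 1)) x := hc1.log hne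
    have hc3 : ContinuousAt (fun y : ℝ => 1 - Real.exp (-y)) x := by fun_prop
    exact (ContinuousAt.mul hc3 (continuousAt_const.sub hc2)).continuousWithinAt

theorem stmt11 (α : ℝ) (hα : 0 < α) (d : ℕ) (hd : 0 < d) (z : Fin d → ℝ)
    (hz : ∀ k, z k ∈ Set.Icc (1 : ℝ) (1 + α)) :
    (∑ k, (z k - 1) / z k * Real.log (α / (z k - 1))) ≤
      (d : ℝ) * (((∏ k, z k) ^ ((1 : ℝ) / d) - 1) / (∏ k, z k) ^ ((1 : ℝ) / d) *
        Real.log (α / ((∏ k, z k) ^ ((1 : ℝ) / d) - 1))) := by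
  set L := Real.log (1 + α) with hLdef
  have hL : 0 < L := Real.log_pos (by linarith)
  set g := gfun α with hg
  -- derivatives
  set g' : ℝ → ℝ := fun x => Real.exp (-x) * (Real.log α - Real.log (Real.exp x - 1)) - 1 with hg'
  have hder : ∀ x ∈ Set.Ioo (0:ℝ) L, HasDerivAt g (g' x) x := by
    intro x hx
    have hx0 : (0:ℝ) < x := hx.1
    have h1x : 1 < Real.exp x := by
      have := Real.exp_lt_exp.2 hx0; simpa using this
    have hne : Real.exp x - 1 ≠ 0 := by linarith
    have hu : HasDerivAt (fun x => 1 - Real.exp (-x)) (Real.exp (-x)) x := by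
      simpa using ((hasDerivAt_neg x).exp.const_sub 1)
    have hv : HasDerivAt (fun x => Real.log α - Real.log (Real.exp x - 1))
        (-(Real.exp x / (Real.exp x - 1))) x := by
      simpa using (((Real.hasDerivAt_exp x).sub_const 1).log hne).const_sub (Real.log α)
    have := hu.mul hv
    have hee : Real.exp (-x) * Real.exp x = 1 := by rw [← Real.exp_add]; simp
    refine this.congr_deriv ?_
    symm
    rw [hg']
    field_simp
    ring_nf
    nlinarith [hee]
  set g'' : ℝ → ℝ := fun x =>
    (-Real.exp (-x)) * (Real.log α - Real.log (Real.exp x - 1)) +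
      Real.exp (-x) * (-(Real.exp x / (Real.exp x - 1))) with hg''
  have hder2 : ∀ x ∈ Set.Ioo (0:ℝ) L, HasDerivAt g' (g'' x) x := by
    intro x hx
    have hx0 : (0:ℝ) < x := hx.1
    have h1x : 1 < Real.exp x := by
      have := Real.exp_lt_exp.2 hx0; simpa using this
    have hne : Real.exp x - 1 ≠ 0 := by linarith
    have hu : HasDerivAt (fun x => Real.exp (-x)) (-Real.exp (-x)) x := by
      simpa using (hasDerivAt_neg x).exp
    have hv : HasDerivAt (fun x => Real.log α - Real.log (Real.exp x - 1))
        (-(Real.exp x / (Real.exp x - 1))) x := by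
      simpa using (((Real.hasDerivAt_exp x).sub_const 1).log hne).const_sub (Real.log α)
    exact (hu.mul hv).sub_const 1
  have hconc : ConcaveOn ℝ (Set.Icc 0 L) g := by
    apply concaveOn_of_hasDerivWithinAt2_nonpos (f' := g') (f'' := g'') (convex_Icc _ _)
      (gfun_cont α hα L)
    · intro x hx
      rw [interior_Icc] at hx
      exact (hder x hx).hasDerivWithinAt
    · intro x hx
      rw [interior_Icc] at hx
      exact (hder2 x hx).hasDerivWithinAt
    · intro x hx
      rw [interior_Icc] at hx
      have hx0 : (0:ℝ) < x := hx.1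
      have h1x : 1 < Real.exp x := by
        have := Real.exp_lt_exp.2 hx0; simpa using this
      have hub : Real.exp x < 1 + α := by
        have := Real.exp_lt_exp.2 hx.2
        rwa [Real.exp_log (by linarith : (0:ℝ) < 1 + α)] at this
      have hA : 0 ≤ Real.log α - Real.log (Real.exp x - 1) := by
        have : Real.log (Real.exp x - 1) ≤ Real.log α :=
          Real.log_le_log (by linarith) (by linarith)
        linarith
      have he : 0 < Real.exp (-x) := Real.exp_pos _
      have hq : 0 < Real.exp x / (Real.exp x - 1) := div_pos (Real.exp_pos x) (by linarith)
      rw [hg'']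
      have t1 : (-Real.exp (-x)) * (Real.log α - Real.log (Real.exp x - 1)) ≤ 0 :=
        mul_nonpos_of_nonpos_of_nonneg (by linarith) hA
      have t2 : Real.exp (-x) * (-(Real.exp x / (Real.exp x - 1))) ≤ 0 :=
        mul_nonpos_of_nonneg_of_nonpos (by linarith) (by linarith)
      linarith
  -- Jensen
  have hd0 : (d:ℝ) ≠ 0 := Nat.cast_ne_zero.2 hd.ne'
  have hmem : ∀ k ∈ Finset.univ, Real.log (z k) ∈ Set.Icc (0:ℝ) L := by
    intro k _
    exact ⟨Real.log_nonneg (hz k).1, Real.log_le_log (by linarith [(hz k).1]) (hz k).2⟩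
  have jensen := hconc.le_map_sum (w := fun _ => 1/(d:ℝ)) (p := fun k => Real.log (z k))
    (t := Finset.univ) (fun i _ => one_div_nonneg.mpr (Nat.cast_nonneg d))
    (by simp [Finset.card_univ]; field_simp) hmem
  simp only [smul_eq_mul] at jensen
  have hzpos : ∀ k, (0:ℝ) < z k := fun k => by linarith [(hz k).1]
  have hP : (0:ℝ) < ∏ k, z k := Finset.prod_pos (fun k _ => hzpos k)
  set M := (∏ k, z k) ^ ((1:ℝ)/d) with hM
  have hlogM : Real.log M = ∑ k, 1/(d:ℝ) * Real.log (z k) := by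
    rw [hM, Real.log_rpow hP, Real.log_prod (fun k _ => (hzpos k).ne'), Finset.mul_sum]
  have hM1 : 1 ≤ M := by
    have h0 : 0 ≤ Real.log M := by
      rw [Real.log_rpow hP]
      have : 0 ≤ Real.log (∏ k, z k) :=
        Real.log_nonneg (by
          calc (1:ℝ) = ∏ _k : Fin d, 1 := by simp
          _ ≤ ∏ k, z k := Finset.prod_le_prod (fun _ _ => zero_le_one) (fun k _ => (hz k).1))
      positivity
    have hMpos : 0 < M := Real.rpow_pos_of_pos hP _
    calc (1:ℝ) ≤ Real.exp (Real.log M) := Real.one_le_exp h0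
    _ = M := Real.exp_log hMpos
  -- bridge
  have bridge : ∀ y : ℝ, 1 ≤ y → (y - 1)/y * Real.log (α/(y-1)) = g (Real.log y) := by
    intro y hy
    rcases eq_or_lt_of_le hy with h | h
    · rw [← h]; simp [hg, gfun]
    · have hy0 : (0:ℝ) < y := by linarith
      have h1 : Real.exp (Real.log y) = y := Real.exp_log hy0
      have h2 : Real.exp (-Real.log y) = y⁻¹ := by rw [Real.exp_neg, h1]
      have hne : y - 1 ≠ 0 := ne_of_gt (by linarith)
      rw [hg]; unfold gfun
      rw [h1, h2, Real.log_div hα.ne' hne]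
      field_simp
  calc (∑ k, (z k - 1) / z k * Real.log (α / (z k - 1)))
      = ∑ k, g (Real.log (z k)) := Finset.sum_congr rfl (fun k _ => bridge _ (hz k).1)
    _ = (d:ℝ) * ∑ k, 1/(d:ℝ) * g (Real.log (z k)) := by
        rw [Finset.mul_sum]
        refine Finset.sum_congr rfl fun k _ => ?_
        field_simp
    _ ≤ (d:ℝ) * g (Real.log M) := by
        apply mul_le_mul_of_nonneg_left _ (by positivity)
        rw [hlogM]
        exact jensen
    _ = (d : ℝ) * ((M - 1) / M * Real.log (α / (M - 1))) := by rw [bridge M hM1]
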